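/- Let i ≥ 1 and p, r ∈ ℤ. Then ∂_i(c^r_p) = c^{r+1}_{p-1} if r = i or r = -i, and ∂_i(c^r_p) = 0 otherwise. -/
import Mathlib


/-!
The polynomial ring `R2 = ℚ[c₁, c₂, …, t₁, t₂, …]`: the variable `Sum.inl p` (for `p ≥ 1`)
is `c_p`, and `Sum.inr i` (for `i ≥ 1`) is `t_i`.
-/

noncomputable section
open MvPolynomial Finset
open scoped Classical

abbrev R2 : Type := MvPolynomial (ℕ ⊕ ℕ) ℚ

/-- The variable `t_i`. -/
def Tv (i : ℕ) : R2 := X (Sum.inr i)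

/-- `c_p`, with the conventions `c_0 = 1` and `c_p = 0` for `p < 0`. -/
def Cv (p : ℤ) : R2 := if p < 0 then 0 else if p = 0 then 1 else X (Sum.inl p.toNat)

/-- The complete homogeneous symmetric polynomial `h_j` evaluated on a list. -/
def hfun : List R2 → ℕ → R2
  | [], j => if j = 0 then 1 else 0
  | a :: L, j => ∑ i ∈ Finset.range (j + 1), a ^ i * hfun L (j - i)

/-- The elementary symmetric polynomial `e_j` evaluated on a list. -/
def efun : List R2 → ℕ → R2
  | [], j => if j = 0 then 1 else 0
  | _ :: _, 0 => 1
  | a :: L, j + 1 => efun L (j + 1) + a * efun L j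

/-- The list `(-t_1, …, -t_r)`. -/
def negT (r : ℕ) : List R2 := (List.range r).map fun i => -Tv (i + 1)

/-- `h^r_j(-t)`: complete homogeneous for `r ≥ 0`, elementary `e^{-r}_j(-t)` for `r < 0`. -/
def hmt (r : ℤ) (j : ℕ) : R2 :=
  if 0 ≤ r then hfun (negT r.toNat) j else efun (negT (-r).toNat) j

/-- `c^r_p := Σ_{j=0}^p c_{p-j} h^r_j(-t)`. -/
def cc (r p : ℤ) : R2 := ∑ j ∈ Finset.range (p.toNat + 1), Cv (p - j) * hmt r j

/-- `a^s_p := (1/2)c_p + Σ_{j=1}^p c_{p-j} h^s_j(-t)`. -/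
def aa (s p : ℤ) : R2 :=
  C (1/2 : ℚ) * Cv p + ∑ j ∈ Finset.Icc 1 p.toNat, Cv (p - j) * hmt s j

/-- Images of the variables under the automorphism `s_i`. -/
def sImg : ℕ → ℕ ⊕ ℕ → R2
  | 0, Sum.inr j => if j = 1 then -Tv 2 else if j = 2 then -Tv 1 else Tv j
  | 0, Sum.inl p =>
      if p = 0 then X (Sum.inl 0)
      else Cv p - 2 * (Tv 1 + Tv 2) *
        ∑ j ∈ Finset.range p, (-1 : R2) ^ j *
          (∑ a ∈ Finset.range (j + 1), Tv 1 ^ a * Tv 2 ^ (j - a)) * Cv ((p : ℤ) - 1 - j)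
  | i + 1, Sum.inr j =>
      if j = i + 1 then Tv (i + 2) else if j = i + 2 then Tv (i + 1) else Tv j
  | _ + 1, Sum.inl p => X (Sum.inl p)

/-- The ring automorphism `s_i` of `R2`. -/
def sA (i : ℕ) : R2 →ₐ[ℚ] R2 := aeval (sImg i)

/-- The fraction field of `R2`. -/
abbrev KK : Type := FractionRing R2

/-- The canonical embedding of `R2` into its fraction field. -/
def toK : R2 →+* KK := algebraMap R2 KK

/-- The denominator `t_1 + t_2` (for `i = 0`) resp. `t_{i+1} - t_i` (for `i ≥ 1`). -/
def dden (i : ℕ) : R2 := if i = 0 then Tv 1 + Tv 2 else Tv (i + 1) - Tv i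

/-- The divided difference operator `∂_i`, with values in the fraction field. -/
def dd (i : ℕ) (f : R2) : KK := (toK f - toK (sA i f)) / toK (dden i)


lemma hfun_zero (L : List R2) : hfun L 0 = 1 := by
  cases L with
  | nil => simp [hfun]
  | cons a L => simp [hfun, hfun_zero L]

lemma efun_zero (L : List R2) : efun L 0 = 1 := by
  cases L with
  | nil => simp [efun]
  | cons a L => simp [efun]

lemma hfun_cons_succ (a : R2) (L : List R2) (j : ℕ) :
    hfun (a :: L) (j + 1) = a * hfun (a :: L) j + hfun L (j + 1) := by
  show (∑ i ∈ Finset.range (j + 1 + 1), a ^ i * hfun L (j + 1 - i)) = _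
  rw [Finset.sum_range_succ']
  simp only [pow_succ, pow_zero, one_mul, Nat.succ_sub_succ]
  rw [show (hfun (a :: L) j) = ∑ i ∈ Finset.range (j + 1), a ^ i * hfun L (j - i) from rfl,
    Finset.mul_sum]
  congr 1
  apply Finset.sum_congr rfl
  intro x _
  ring

lemma hfun_singleton (a : R2) (n : ℕ) : hfun [a] n = a ^ n := by
  show (∑ i ∈ Finset.range (n + 1), a ^ i * hfun ([] : List R2) (n - i)) = a ^ n
  rw [Finset.sum_eq_single n]
  · simp [hfun]
  · intro b hb hbn
    have : n - b ≠ 0 := by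
      simp only [Finset.mem_range] at hb
      omega
    simp [hfun, this]
  · intro h
    exact absurd (Finset.self_mem_range_succ n) h

lemma hfun_K (a b : R2) (L : List R2) (j : ℕ) :
    a * hfun (a :: L) j - b * hfun (b :: L) j = (a - b) * hfun (a :: b :: L) j := by
  induction j with
  | zero => simp [hfun_zero]
  | succ j ih =>
    rw [hfun_cons_succ a L j, hfun_cons_succ b L j, hfun_cons_succ a (b :: L) j,
      hfun_cons_succ b L j]
    linear_combination a * ih

lemma hfun_swap (a b : R2) (L : List R2) (j : ℕ) :
    hfun (a :: b :: L) j = hfun (b :: a :: L) j := by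
  by_cases hab : a = b
  · subst hab; rfl
  · have h1 := hfun_K a b L j
    have h2 := hfun_K b a L j
    have h3 : (a - b) * hfun (a :: b :: L) j = (a - b) * hfun (b :: a :: L) j := by
      linear_combination -h1 - h2
    exact mul_left_cancel₀ (sub_ne_zero.mpr hab) h3

lemma hfun_congr (a : R2) {L1 L2 : List R2} (h : ∀ j, hfun L1 j = hfun L2 j) (j : ℕ) :
    hfun (a :: L1) j = hfun (a :: L2) j := by
  show (∑ i ∈ Finset.range (j + 1), a ^ i * hfun L1 (j - i)) = _
  simp [h]
  rfl

lemma hfun_middle_swap (P : List R2) (a b : R2) (S : List R2) (j : ℕ) :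
    hfun (P ++ a :: b :: S) j = hfun (P ++ b :: a :: S) j := by
  induction P generalizing j with
  | nil => exact hfun_swap a b S j
  | cons c P ih => exact hfun_congr c (fun k => ih k) j

lemma hfun_diff (L : List R2) (a b : R2) (j : ℕ) :
    hfun (L ++ [a]) (j + 1) - hfun (L ++ [b]) (j + 1) = (a - b) * hfun (L ++ [a, b]) j := by
  induction L generalizing j with
  | nil =>
    simp only [List.nil_append, hfun_singleton]
    have hab : hfun [a, b] j = ∑ i ∈ Finset.range (j + 1), a ^ i * b ^ (j - i) := by
      show (∑ i ∈ Finset.range (j + 1), a ^ i * hfun [b] (j - i)) = _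
      simp [hfun_singleton]
    rw [hab, mul_comm, ← geom_sum₂_mul a b (j + 1)]
    norm_num
  | cons c L ih =>
    simp only [List.cons_append]
    induction j with
    | zero =>
      rw [hfun_cons_succ c (L ++ [a]) 0, hfun_cons_succ c (L ++ [b]) 0]
      have h0a : hfun (c :: (L ++ [a])) 0 = 1 := hfun_zero _
      have h0b : hfun (c :: (L ++ [b])) 0 = 1 := hfun_zero _
      have h0c : hfun (L ++ [a, b]) 0 = 1 := hfun_zero _
      rw [h0a, h0b, hfun_zero]
      linear_combination ih 0 + (a - b) * h0c
    | succ k ihj =>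
      rw [hfun_cons_succ c (L ++ [a]) (k + 1), hfun_cons_succ c (L ++ [b]) (k + 1),
        hfun_cons_succ c (L ++ [a, b]) k]
      linear_combination c * ihj + ih (k + 1)

lemma efun_diff (L : List R2) (a b : R2) (j : ℕ) :
    efun (L ++ [a]) (j + 1) - efun (L ++ [b]) (j + 1) = (a - b) * efun L j := by
  induction L generalizing j with
  | nil =>
    cases j with
    | zero => simp [efun]
    | succ k => simp [efun]
  | cons c L ih =>
    simp only [List.cons_append]
    cases j with
    | zero =>
      show efun (L ++ [a]) 1 + c * efun (L ++ [a]) 0 - (efun (L ++ [b]) 1 + c * efun (L ++ [b]) 0)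
        = (a - b) * efun (c :: L) 0
      rw [efun_zero, efun_zero, efun_zero]
      linear_combination ih 0 + (a - b) * efun_zero L
    | succ k =>
      show efun (L ++ [a]) (k + 2) + c * efun (L ++ [a]) (k + 1)
          - (efun (L ++ [b]) (k + 2) + c * efun (L ++ [b]) (k + 1))
        = (a - b) * (efun L (k + 1) + c * efun L k)
      linear_combination ih (k + 1) + c * ih k

lemma efun_congr (a : R2) {L1 L2 : List R2} (h : ∀ j, efun L1 j = efun L2 j) (j : ℕ) :
    efun (a :: L1) j = efun (a :: L2) j := by
  cases j with
  | zero => rfl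
  | succ k => show efun L1 (k + 1) + a * efun L1 k = _; rw [h, h]; rfl

lemma efun_swap (a b : R2) (L : List R2) (j : ℕ) :
    efun (a :: b :: L) j = efun (b :: a :: L) j := by
  match j with
  | 0 => rfl
  | 1 =>
    show efun (b :: L) 1 + a * efun (b :: L) 0 = efun (a :: L) 1 + b * efun (a :: L) 0
    show efun L 1 + b * efun L 0 + a * efun (b :: L) 0 = efun L 1 + a * efun L 0 + b * efun (a :: L) 0
    rw [efun_zero, efun_zero, efun_zero]
    ring
  | (k + 2) =>
    show efun (b :: L) (k + 2) + a * efun (b :: L) (k + 1)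
      = efun (a :: L) (k + 2) + b * efun (a :: L) (k + 1)
    show efun L (k + 2) + b * efun L (k + 1) + a * (efun L (k + 1) + b * efun L k)
      = efun L (k + 2) + a * efun L (k + 1) + b * (efun L (k + 1) + a * efun L k)
    ring

lemma efun_middle_swap (P : List R2) (a b : R2) (S : List R2) (j : ℕ) :
    efun (P ++ a :: b :: S) j = efun (P ++ b :: a :: S) j := by
  induction P generalizing j with
  | nil => exact efun_swap a b S j
  | cons c P ih => exact efun_congr c (fun k => ih k) j

lemma sA_hfun (i : ℕ) (L : List R2) (j : ℕ) :
    sA i (hfun L j) = hfun (L.map (sA i)) j := by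
  induction L generalizing j with
  | nil =>
    show sA i (if j = 0 then 1 else 0) = (if j = 0 then 1 else 0)
    split_ifs <;> simp
  | cons a L ih =>
    show sA i (∑ k ∈ Finset.range (j + 1), a ^ k * hfun L (j - k)) = _
    rw [map_sum]
    show _ = ∑ k ∈ Finset.range (j + 1), (sA i a) ^ k * hfun (L.map (sA i)) (j - k)
    apply Finset.sum_congr rfl
    intro k _
    rw [map_mul, map_pow, ih]

lemma sA_efun (i : ℕ) (L : List R2) (j : ℕ) :
    sA i (efun L j) = efun (L.map (sA i)) j := by
  induction L generalizing j with
  | nil =>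
    show sA i (if j = 0 then 1 else 0) = (if j = 0 then 1 else 0)
    split_ifs <;> simp
  | cons a L ih =>
    cases j with
    | zero => show sA i 1 = 1; simp
    | succ k =>
      show sA i (efun L (k + 1) + a * efun L k) = _
      rw [map_add, map_mul, ih, ih]
      rfl

lemma sA_Tv (k j : ℕ) :
    sA (k + 1) (Tv j) = if j = k + 1 then Tv (k + 2) else if j = k + 2 then Tv (k + 1) else Tv j := by
  show aeval (sImg (k + 1)) (X (Sum.inr j)) = _
  rw [aeval_X]
  rfl

lemma sA_fix_Tv (k j : ℕ) (h1 : j ≠ k + 1) (h2 : j ≠ k + 2) : sA (k + 1) (Tv j) = Tv j := by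
  rw [sA_Tv]; simp [h1, h2]

lemma sA_Cv (k : ℕ) (p : ℤ) : sA (k + 1) (Cv p) = Cv p := by
  unfold Cv
  split_ifs
  · simp
  · simp
  · show aeval (sImg (k + 1)) (X (Sum.inl p.toNat)) = X (Sum.inl p.toNat)
    rw [aeval_X]
    rfl

lemma negT_succ (m : ℕ) : negT (m + 1) = negT m ++ [-Tv (m + 1)] := by
  simp [negT, List.range_succ]

lemma negT_add (a b : ℕ) :
    negT (a + b) = negT a ++ ((List.range b).map fun q => -Tv (a + q + 1)) := by
  induction b with
  | zero => simp [negT]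
  | succ b ih =>
    rw [show a + (b + 1) = (a + b) + 1 from rfl, negT_succ, ih, List.range_succ]
    simp

lemma negT_two (k : ℕ) : negT (k + 2) = negT k ++ [-Tv (k + 1), -Tv (k + 2)] := by
  rw [negT_succ, negT_succ]
  simp

lemma map_negT_lt (k m : ℕ) (h : m ≤ k) : (negT m).map (sA (k + 1)) = negT m := by
  unfold negT
  rw [List.map_map]
  apply List.map_congr_left
  intro q hq
  simp only [List.mem_range] at hq
  show sA (k + 1) (-Tv (q + 1)) = -Tv (q + 1)
  rw [map_neg, sA_fix_Tv k (q + 1) (by omega) (by omega)]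

lemma negT_split (k b : ℕ) :
    negT (k + 2 + b) = negT k ++ (-Tv (k + 1)) :: (-Tv (k + 2)) ::
      ((List.range b).map fun q => -Tv (k + 2 + q + 1)) := by
  rw [negT_add (k + 2) b, negT_two]
  simp

lemma map_negT_split (k b : ℕ) :
    (negT (k + 2 + b)).map (sA (k + 1)) = negT k ++ (-Tv (k + 2)) :: (-Tv (k + 1)) ::
      ((List.range b).map fun q => -Tv (k + 2 + q + 1)) := by
  rw [negT_split, List.map_append, map_negT_lt k k le_rfl, List.map_cons, List.map_cons,
    List.map_map]
  congr 1
  congr 1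
  · rw [map_neg, sA_Tv]; simp
  congr 1
  · rw [map_neg, sA_Tv]; simp
  apply List.map_congr_left
  intro q hq
  show sA (k + 1) (-Tv (k + 2 + q + 1)) = -Tv (k + 2 + q + 1)
  rw [map_neg, sA_fix_Tv k _ (by omega) (by omega)]

lemma map_negT_eq (k : ℕ) :
    (negT (k + 1)).map (sA (k + 1)) = negT k ++ [-Tv (k + 2)] := by
  rw [negT_succ, List.map_append, map_negT_lt k k le_rfl, List.map_cons, List.map_nil,
    map_neg, sA_Tv]
  simp

lemma sA_hfun_negT (k m : ℕ) (hm : m ≠ k + 1) (j : ℕ) :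
    sA (k + 1) (hfun (negT m) j) = hfun (negT m) j := by
  rw [sA_hfun]
  rcases le_or_gt m k with h | h
  · rw [map_negT_lt k m h]
  · have hb : ∃ b, m = k + 2 + b := ⟨m - (k + 2), by omega⟩
    obtain ⟨b, rfl⟩ := hb
    rw [map_negT_split]
    conv_rhs => rw [negT_split]
    exact hfun_middle_swap _ _ _ _ j

lemma sA_efun_negT (k m : ℕ) (hm : m ≠ k + 1) (j : ℕ) :
    sA (k + 1) (efun (negT m) j) = efun (negT m) j := by
  rw [sA_efun]
  rcases le_or_gt m k with h | h
  · rw [map_negT_lt k m h]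
  · have hb : ∃ b, m = k + 2 + b := ⟨m - (k + 2), by omega⟩
    obtain ⟨b, rfl⟩ := hb
    rw [map_negT_split]
    conv_rhs => rw [negT_split]
    exact efun_middle_swap _ _ _ _ j

lemma hmt_zero (r : ℤ) : hmt r 0 = 1 := by
  unfold hmt
  split_ifs
  · exact hfun_zero _
  · exact efun_zero _

lemma hmt_nonneg (m : ℕ) (j : ℕ) : hmt (m : ℤ) j = hfun (negT m) j := by
  unfold hmt
  rw [if_pos (by positivity)]
  simp

lemma hmt_neg (m : ℕ) (j : ℕ) : hmt (-(m : ℤ)) j = efun (negT m) j := by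
  cases m with
  | zero =>
    show hmt 0 j = efun (negT 0) j
    rw [show (0 : ℤ) = ((0 : ℕ) : ℤ) by norm_num, hmt_nonneg 0 j]
    show hfun [] j = efun [] j
    cases j <;> rfl
  | succ m =>
    unfold hmt
    rw [if_neg (by omega)]
    norm_num

/-- invariance of `hmt r` under `sA i` when `r ≠ ±i`. -/
lemma sA_hmt_fix (k : ℕ) (r : ℤ) (h1 : r ≠ (k + 1 : ℕ)) (h2 : r ≠ -((k + 1 : ℕ) : ℤ)) (j : ℕ) :
    sA (k + 1) (hmt r j) = hmt r j := by
  rcases le_or_gt 0 r with hr | hr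
  · obtain ⟨m, rfl⟩ := Int.eq_ofNat_of_zero_le hr
    rw [hmt_nonneg]
    exact sA_hfun_negT k m (by exact_mod_cast fun hh => h1 (by exact_mod_cast hh)) j
  · obtain ⟨m, rfl⟩ : ∃ m : ℕ, r = -(m : ℤ) := ⟨(-r).toNat, by omega⟩
    rw [hmt_neg]
    refine sA_efun_negT k m (fun hh => h2 ?_) j
    rw [hh]

/-- the difference identity for `hmt` when `r = ±i`. -/
lemma hmt_diff (k : ℕ) (r : ℤ) (hr : r = (k + 1 : ℕ) ∨ r = -((k + 1 : ℕ) : ℤ)) (j : ℕ) :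
    hmt r (j + 1) - sA (k + 1) (hmt r (j + 1)) = dden (k + 1) * hmt (r + 1) j := by
  have hd : dden (k + 1) = Tv (k + 2) - Tv (k + 1) := by
    unfold dden
    rw [if_neg (by omega)]
  rcases hr with hr | hr
  · subst hr
    rw [hmt_nonneg (k + 1) (j + 1), sA_hfun, map_negT_eq,
      show ((k + 1 : ℕ) : ℤ) + 1 = ((k + 2 : ℕ) : ℤ) by push_cast; ring, hmt_nonneg (k + 2) j]
    conv_lhs => rw [negT_succ k]
    rw [hfun_diff (negT k) (-Tv (k + 1)) (-Tv (k + 2)) j, hd]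
    rw [show negT (k + 2) = negT k ++ [-Tv (k + 1), -Tv (k + 2)] from negT_two k]
    ring_nf
  · subst hr
    rw [hmt_neg (k + 1) (j + 1), sA_efun, map_negT_eq,
      show -((k + 1 : ℕ) : ℤ) + 1 = -((k : ℕ) : ℤ) by push_cast; ring, hmt_neg k j]
    conv_lhs => rw [negT_succ k]
    rw [efun_diff (negT k) (-Tv (k + 1)) (-Tv (k + 2)) j, hd]
    ring_nf

lemma sA_cc_fix (k : ℕ) (r p : ℤ) (h1 : r ≠ ((k + 1 : ℕ) : ℤ)) (h2 : r ≠ -((k + 1 : ℕ) : ℤ)) :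
    sA (k + 1) (cc r p) = cc r p := by
  unfold cc
  rw [map_sum]
  apply Finset.sum_congr rfl
  intro j _
  rw [map_mul, sA_Cv, sA_hmt_fix k r h1 h2]

lemma cc_key (k : ℕ) (r p : ℤ) (hr : r = ((k + 1 : ℕ) : ℤ) ∨ r = -((k + 1 : ℕ) : ℤ)) :
    cc r p - sA (k + 1) (cc r p) = dden (k + 1) * cc (r + 1) (p - 1) := by
  have hsA : sA (k + 1) (cc r p)
      = ∑ j ∈ Finset.range (p.toNat + 1), Cv (p - j) * sA (k + 1) (hmt r j) := by
    unfold cc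
    rw [map_sum]
    apply Finset.sum_congr rfl
    intro j _
    rw [map_mul, sA_Cv]
  rw [hsA, show cc r p = ∑ j ∈ Finset.range (p.toNat + 1), Cv (p - j) * hmt r j from rfl,
    ← Finset.sum_sub_distrib]
  rcases le_or_gt p 0 with hp | hp
  · have h0 : p.toNat = 0 := by omega
    have hc : cc (r + 1) (p - 1) = 0 := by
      unfold cc
      rw [show (p - 1).toNat = 0 by omega, Finset.sum_range_one, hmt_zero, mul_one]
      unfold Cv
      rw [if_pos (by omega)]
    rw [h0, hc, mul_zero, Finset.sum_range_one, hmt_zero, map_one]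
    ring
  · obtain ⟨n, hn⟩ : ∃ n, p.toNat = n + 1 := ⟨p.toNat - 1, by omega⟩
    have hL : (∑ j ∈ Finset.range (n + 1 + 1),
          (Cv (p - j) * hmt r j - Cv (p - j) * sA (k + 1) (hmt r j)))
        = ∑ j ∈ Finset.range (n + 1),
          (Cv (p - ((j + 1 : ℕ) : ℤ)) * hmt r (j + 1)
            - Cv (p - ((j + 1 : ℕ) : ℤ)) * sA (k + 1) (hmt r (j + 1))) := by
      rw [Finset.sum_range_succ']
      norm_num [hmt_zero]
    have hR : cc (r + 1) (p - 1)
        = ∑ j ∈ Finset.range (n + 1), Cv (p - ((j + 1 : ℕ) : ℤ)) * hmt (r + 1) j := by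
      unfold cc
      rw [show (p - 1).toNat = n by omega]
      apply Finset.sum_congr rfl
      intro j _
      congr 2
      push_cast
      ring
    rw [hn, hL, hR, Finset.mul_sum]
    apply Finset.sum_congr rfl
    intro j _
    linear_combination Cv (p - ((j + 1 : ℕ) : ℤ)) * hmt_diff k r hr j

theorem statement4 (i : ℕ) (hi : 1 ≤ i) (p r : ℤ) :
    ((r = (i : ℤ) ∨ r = -(i : ℤ)) → dd i (cc r p) = toK (cc (r + 1) (p - 1))) ∧
    (r ≠ (i : ℤ) → r ≠ -(i : ℤ) → dd i (cc r p) = 0) := by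
  obtain ⟨k, rfl⟩ : ∃ k, i = k + 1 := ⟨i - 1, by omega⟩
  have hinj : Function.Injective toK := IsFractionRing.injective R2 KK
  have hne : toK (dden (k + 1)) ≠ 0 := by
    intro h
    have h0 : dden (k + 1) = 0 := hinj (by rw [h, map_zero])
    unfold dden at h0
    rw [if_neg (by omega)] at h0
    have h1 : Tv (k + 1 + 1) = Tv (k + 1) := sub_eq_zero.mp h0
    have h2 : (Sum.inr (k + 1 + 1) : ℕ ⊕ ℕ) = Sum.inr (k + 1) :=
      MvPolynomial.X_injective h1
    simp at h2
  constructor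
  · intro hr
    have key := cc_key k r p hr
    show (toK (cc r p) - toK (sA (k + 1) (cc r p))) / toK (dden (k + 1)) = _
    rw [← map_sub, key, map_mul, mul_comm, mul_div_assoc, div_self hne, mul_one]
  · intro h1 h2
    show (toK (cc r p) - toK (sA (k + 1) (cc r p))) / toK (dden (k + 1)) = 0
    rw [sA_cc_fix k r p h1 h2, sub_self, zero_div]
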